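/- One step of the MABSTA weight update satisfies W'/W ≤ 1 + (α/(1−γ))·(Σ_{i=1}^N R_i^{(x_i)} + Σ_{(m,n)∈E} R_{mn}^{(x_m x_n)}) + ((e−2)α²/(1−γ))·(|E|/M^{N−2})·Σ_{y∈F} R̂_y, where W = Σ_{y∈F} w_y and W' = Σ_{y∈F} w_y·exp(α·R̂_y). -/

import Mathlib

open Finset

section MabstaHelpers

private lemma mabsta_exp_quadratic {z : ℝ} (h0 : 0 ≤ z) (h1 : z ≤ 1) :
    Real.exp z ≤ 1 + z + z ^ 2 := by
  have hb := Real.exp_bound (x := z) (by rw [abs_of_nonneg h0]; exact h1) (n := 3) (by norm_num)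
  rw [abs_of_nonneg h0] at hb
  norm_num [Finset.sum_range_succ, Nat.factorial] at hb
  have hb' := abs_le.1 hb
  have hz3 : z ^ 3 ≤ z ^ 2 := by nlinarith
  nlinarith [hb'.2]

private lemma mabsta_count_one {N M : ℕ} (i : Fin N) (x : Fin N → Fin M) :
    (Finset.univ.filter fun z : Fin N → Fin M => z i = x i).card = M ^ (N - 1) := by
  classical
  have he : (Finset.univ.filter fun z : Fin N → Fin M => z i = x i)
      = Fintype.piFinset (fun j => if j = i then {x i} else Finset.univ) := by
    ext z
    simp only [mem_filter, mem_univ, true_and, Fintype.mem_piFinset]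
    constructor
    · intro h j
      by_cases hj : j = i
      · subst hj; simp [h]
      · simp [hj]
    · intro h
      have := h i
      simpa using this
  rw [he, Fintype.card_piFinset]
  have : ∀ j : Fin N, ((if j = i then ({x i} : Finset (Fin M)) else Finset.univ)).card
      = if j = i then 1 else M := by
    intro j; split <;> simp
  rw [Finset.prod_congr rfl (fun j _ => this j)]
  rw [← Finset.mul_prod_erase Finset.univ _ (Finset.mem_univ i)]
  simp only [if_pos rfl]
  rw [Finset.prod_ite_of_false]
  · rw [Finset.prod_const, Finset.card_erase_of_mem (Finset.mem_univ i)]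
    simp
  · intro j hj; exact Finset.ne_of_mem_erase hj

private lemma mabsta_count_two {N M : ℕ} (m n : Fin N) (hmn : m ≠ n) (x : Fin N → Fin M) :
    (Finset.univ.filter fun z : Fin N → Fin M => z m = x m ∧ z n = x n).card = M ^ (N - 2) := by
  classical
  have he : (Finset.univ.filter fun z : Fin N → Fin M => z m = x m ∧ z n = x n)
      = Fintype.piFinset (fun j => if j = m then {x m} else if j = n then {x n} else Finset.univ) := by
    ext z
    simp only [mem_filter, mem_univ, true_and, Fintype.mem_piFinset]
    constructor
    · intro h j
      by_cases hj : j = m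
      · subst hj; simp [h.1]
      · by_cases hj' : j = n
        · subst hj'; simp [hj, h.2]
        · simp [hj, hj']
    · intro h
      have h1 := h m
      have h2 := h n
      rw [if_pos rfl, Finset.mem_singleton] at h1
      rw [if_neg (fun h => hmn h.symm), if_pos rfl, Finset.mem_singleton] at h2
      exact ⟨h1, h2⟩
  rw [he, Fintype.card_piFinset]
  have hc : ∀ j : Fin N, ((if j = m then ({x m} : Finset (Fin M)) else if j = n then {x n} else Finset.univ)).card
      = if j = m then 1 else if j = n then 1 else M := by
    intro j; split
    · simp
    · split <;> simp
  rw [Finset.prod_congr rfl (fun j _ => hc j)]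
  have hsub : ((Finset.univ.erase m).erase n : Finset (Fin N)) ⊆ Finset.univ := Finset.subset_univ _
  rw [← Finset.prod_subset hsub]
  · have : ∀ j ∈ (Finset.univ.erase m).erase n,
        (if j = m then 1 else if j = n then 1 else M) = M := by
      intro j hj
      rw [if_neg (Finset.ne_of_mem_erase (Finset.mem_of_mem_erase hj)),
        if_neg (Finset.ne_of_mem_erase hj)]
    rw [Finset.prod_congr rfl this, Finset.prod_const,
      Finset.card_erase_of_mem (Finset.mem_erase.2 ⟨fun h => hmn h.symm, Finset.mem_univ n⟩),
      Finset.card_erase_of_mem (Finset.mem_univ m)]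
    simp only [Finset.card_univ, Fintype.card_fin]
    have h12 : N - 1 - 1 = N - 2 := by omega
    rw [h12]
  · intro j _ hj
    simp only [Finset.mem_erase, Finset.mem_univ, and_true, not_and_or, not_not] at hj
    rcases hj with h | h
    · subst h
      rw [if_neg (fun h => hmn h.symm), if_pos rfl]
    · subst h; rw [if_pos rfl]

private lemma mabsta_pair_bound {c c' Q P P' ν ν' : ℝ} (hc : 0 ≤ c) (hc' : 0 ≤ c')
    (hQ0 : 0 ≤ Q) (hQP : Q ≤ P) (hQP' : Q ≤ P')
    (h1 : c * P ≤ 1) (h2 : c' * P' ≤ 1) (hν : 0 < ν) (hν' : 0 < ν') :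
    c * c' * Q ≤ (c * (ν / ν') + c' * (ν' / ν)) / 2 := by
  have hA : c * Q ≤ 1 := le_trans (mul_le_mul_of_nonneg_left hQP hc) h1
  have hB : c' * Q ≤ 1 := le_trans (mul_le_mul_of_nonneg_left hQP' hc') h2
  have hAB : (c * Q) * (c' * Q) ≤ 1 :=
    mul_le_one₀ hA (mul_nonneg hc' hQ0) hB
  have hcc : (0:ℝ) ≤ c * c' := mul_nonneg hc hc'
  have key : (c * c' * Q) ^ 2 ≤ c * c' := by nlinarith
  set u := c * (ν / ν') with hu_def
  set v := c' * (ν' / ν) with hv_def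
  have hu : 0 ≤ u := mul_nonneg hc (le_of_lt (div_pos hν hν'))
  have hv : 0 ≤ v := mul_nonneg hc' (le_of_lt (div_pos hν' hν))
  have huv : u * v = c * c' := by
    rw [hu_def, hv_def]; field_simp
  have hL0 : 0 ≤ c * c' * Q := mul_nonneg hcc hQ0
  nlinarith [sq_nonneg (u - v), sq_nonneg (c * c' * Q - (u + v) / 2),
    sq_nonneg (c * c' * Q + (u + v) / 2)]

private lemma mabsta_second_moment {F ι : Type*} [Fintype F] [DecidableEq F] (T : Finset ι)
    (A : ι → Finset F) (c ν : ι → ℝ) (p : F → ℝ)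
    (hp : ∀ y, 0 ≤ p y)
    (hc : ∀ t ∈ T, 0 ≤ c t)
    (hν : ∀ t ∈ T, 0 < ν t)
    (hcP : ∀ t ∈ T, c t * (∑ y ∈ A t, p y) ≤ 1) :
    ∑ y : F, p y * (∑ t ∈ T, c t * (if y ∈ A t then (1:ℝ) else 0)) ^ 2
      ≤ (∑ t ∈ T, c t * ν t) * (∑ t ∈ T, 1 / ν t) := by
  have expand : ∑ y : F, p y * (∑ t ∈ T, c t * (if y ∈ A t then (1:ℝ) else 0)) ^ 2
      = ∑ t ∈ T, ∑ t' ∈ T, c t * c t' * (∑ y ∈ A t ∩ A t', p y) := by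
    have h1 : ∀ y : F, p y * (∑ t ∈ T, c t * (if y ∈ A t then (1:ℝ) else 0)) ^ 2
        = ∑ t ∈ T, ∑ t' ∈ T, c t * c t' * (if y ∈ A t ∩ A t' then p y else 0) := by
      intro y
      rw [sq, Finset.sum_mul_sum, Finset.mul_sum]
      refine Finset.sum_congr rfl (fun t _ => ?_)
      rw [Finset.mul_sum]
      refine Finset.sum_congr rfl (fun t' _ => ?_)
      by_cases h1 : y ∈ A t <;> by_cases h2 : y ∈ A t' <;>
        simp [h1, h2, Finset.mem_inter] <;> ring
    rw [Finset.sum_congr rfl (fun y _ => h1 y)]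
    rw [Finset.sum_comm]
    refine Finset.sum_congr rfl (fun t _ => ?_)
    rw [Finset.sum_comm]
    refine Finset.sum_congr rfl (fun t' _ => ?_)
    rw [← Finset.mul_sum, Finset.sum_ite_mem, Finset.univ_inter]
  rw [expand]
  have step : ∑ t ∈ T, ∑ t' ∈ T, c t * c t' * (∑ y ∈ A t ∩ A t', p y)
      ≤ ∑ t ∈ T, ∑ t' ∈ T, (c t * (ν t / ν t') + c t' * (ν t' / ν t)) / 2 := by
    refine Finset.sum_le_sum (fun t ht => Finset.sum_le_sum (fun t' ht' => ?_))
    refine mabsta_pair_bound (hc t ht) (hc t' ht') ?_ ?_ ?_ (hcP t ht) (hcP t' ht')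
      (hν t ht) (hν t' ht')
    · exact Finset.sum_nonneg (fun y _ => hp y)
    · exact Finset.sum_le_sum_of_subset_of_nonneg Finset.inter_subset_left (fun y _ _ => hp y)
    · exact Finset.sum_le_sum_of_subset_of_nonneg Finset.inter_subset_right (fun y _ _ => hp y)
  refine le_trans step (le_of_eq ?_)
  have hswap : ∑ t ∈ T, ∑ t' ∈ T, c t' * (ν t' / ν t) / 2
      = ∑ t ∈ T, ∑ t' ∈ T, c t * (ν t / ν t') / 2 := Finset.sum_comm
  simp only [add_div, Finset.sum_add_distrib]
  rw [hswap, Finset.sum_mul_sum]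
  rw [← Finset.sum_add_distrib]
  refine Finset.sum_congr rfl (fun t ht => ?_)
  rw [← Finset.sum_add_distrib]
  refine Finset.sum_congr rfl (fun t' ht' => ?_)
  ring

end MabstaHelpers

set_option maxHeartbeats 1000000 in
/-- **one-step weight-update bound, eq. (18) of the paper.**
One step of the MABSTA weight update satisfies
`W'/W ≤ 1 + (α/(1−γ))·(Σ_i R_i^{(x_i)} + Σ_{(m,n)∈E} R_{mn}^{(x_m x_n)})
       + ((e−2)α²/(1−γ))·(|E|/M^{N−2})·Σ_{y∈F} R̂_y`,
where `W = Σ_y w_y` and `W' = Σ_y w_y·exp(α·R̂_y)`. -/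
theorem mabsta_one_step_weight_bound
    (N M : ℕ) (hN : 2 ≤ N) (hM : 3 ≤ M)
    (E : Finset (Fin N × Fin N)) (hE : ∀ e ∈ E, e.1 ≠ e.2) (hEcard : 3 ≤ E.card)
    (γ : ℝ) (hγ0 : 0 < γ) (hγ1 : γ < 1)
    (α : ℝ) (hα : α = γ / ((M : ℝ) * ((N : ℝ) + (E.card : ℝ) * (M : ℝ))))
    (w : (Fin N → Fin M) → ℝ) (hw : ∀ y, 0 < w y)
    (p : (Fin N → Fin M) → ℝ)
    (hp : ∀ y, p y =
      (1 - γ) * (w y / ∑ z : Fin N → Fin M, w z) + γ / (M : ℝ) ^ N)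
    (x : Fin N → Fin M)
    (R : Fin N → Fin M → ℝ) (hR : ∀ i j, R i j ∈ Set.Icc (0 : ℝ) 1)
    (Re : Fin N × Fin N → Fin M → Fin M → ℝ)
    (hRe : ∀ e ∈ E, ∀ j k, Re e j k ∈ Set.Icc (0 : ℝ) 1)
    (Rhat : Fin N → Fin M → ℝ)
    (hRhat : ∀ i j, Rhat i j =
      if j = x i then
        R i j / (∑ z ∈ Finset.univ.filter (fun z : Fin N → Fin M => z i = x i), p z)
      else 0)
    (Rhate : Fin N × Fin N → Fin M → Fin M → ℝ)
    (hRhate : ∀ e ∈ E, ∀ j k, Rhate e j k =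
      if j = x e.1 ∧ k = x e.2 then
        Re e j k / (∑ z ∈ Finset.univ.filter
          (fun z : Fin N → Fin M => z e.1 = x e.1 ∧ z e.2 = x e.2), p z)
      else 0)
    (RhatArm : (Fin N → Fin M) → ℝ)
    (hRhatArm : ∀ y, RhatArm y =
      ∑ i, Rhat i (y i) + ∑ e ∈ E, Rhate e (y e.1) (y e.2)) :
    (∑ y : Fin N → Fin M, w y * Real.exp (α * RhatArm y))
        / (∑ y : Fin N → Fin M, w y)
      ≤ 1
        + α / (1 - γ) * (∑ i, R i (x i) + ∑ e ∈ E, Re e (x e.1) (x e.2))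
        + (Real.exp 1 - 2) * α ^ 2 / (1 - γ) * ((E.card : ℝ) / (M : ℝ) ^ (N - 2))
            * ∑ y : Fin N → Fin M, RhatArm y := by
  -- basic positivity facts
  have hM0 : (0:ℝ) < (M:ℝ) := by
    have : (3:ℝ) ≤ (M:ℝ) := by exact_mod_cast hM
    linarith
  have hN0 : (2:ℝ) ≤ (N:ℝ) := by exact_mod_cast hN
  have hE0 : (3:ℝ) ≤ (E.card:ℝ) := by exact_mod_cast hEcard
  have h1γ : (0:ℝ) < 1 - γ := by linarith
  have hMN : (0:ℝ) < (M:ℝ)^N := by positivity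
  have hden : (0:ℝ) < (M:ℝ) * ((N:ℝ) + (E.card:ℝ) * (M:ℝ)) := by
    have h1 : (0:ℝ) ≤ (E.card:ℝ) * (M:ℝ) := by positivity
    nlinarith
  have hαpos : 0 < α := by
    rw [hα]; exact div_pos hγ0 hden
  have hpow1 : (M:ℝ)^N = (M:ℝ)^(N-1) * M := by
    rw [← pow_succ]; congr 1; omega
  have hpow2 : (M:ℝ)^N = (M:ℝ)^(N-2) * M^2 := by
    rw [← pow_add]; congr 1; omega
  have hpw1 : (0:ℝ) < (M:ℝ)^(N-1) := by positivity
  have hpw2 : (0:ℝ) < (M:ℝ)^(N-2) := by positivity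
  set W := ∑ z : Fin N → Fin M, w z with hWdef
  have hne' : Nonempty (Fin N → Fin M) := ⟨fun _ => ⟨0, by omega⟩⟩
  have hWpos : 0 < W := Finset.sum_pos (fun y _ => hw y) Finset.univ_nonempty
  have hplow : ∀ y, γ / (M:ℝ)^N ≤ p y := by
    intro y
    rw [hp y]
    have h1 : 0 ≤ (1 - γ) * (w y / W) :=
      mul_nonneg h1γ.le (div_nonneg (hw y).le hWpos.le)
    linarith
  have hp0 : ∀ y, 0 ≤ p y :=
    fun y => le_trans (le_of_lt (div_pos hγ0 hMN)) (hplow y)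
  -- the atom structure
  set T : Finset (Fin N ⊕ Fin N × Fin N) := Finset.univ.disjSum E with hT
  set A : Fin N ⊕ Fin N × Fin N → Finset (Fin N → Fin M) :=
    Sum.elim
      (fun i => Finset.univ.filter (fun z : Fin N → Fin M => z i = x i))
      (fun e => Finset.univ.filter
        (fun z : Fin N → Fin M => z e.1 = x e.1 ∧ z e.2 = x e.2)) with hA
  set c : Fin N ⊕ Fin N × Fin N → ℝ :=
    Sum.elim (fun i => Rhat i (x i)) (fun e => Rhate e (x e.1) (x e.2)) with hc
  set ν : Fin N ⊕ Fin N × Fin N → ℝ :=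
    Sum.elim (fun _ => ((M:ℝ))^(N-1)) (fun _ => ((M:ℝ))^(N-2)) with hν
  have hνpos : ∀ t ∈ T, 0 < ν t := by
    rintro (i | e) _ <;> simp [hν, hpw1, hpw2]
  -- cardinalities of the atom sets
  have hcard : ∀ t ∈ T, ((A t).card : ℝ) = ν t := by
    rintro (i | e) ht
    · simp only [hA, hν, Sum.elim_inl]
      rw [mabsta_count_one i x]; push_cast; ring
    · have he : e ∈ E := by
        rw [hT] at ht; exact (Finset.inr_mem_disjSum).1 ht
      simp only [hA, hν, Sum.elim_inr]
      rw [mabsta_count_two e.1 e.2 (hE e he) x]; push_cast; ring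
  -- lower bound on the atom probabilities
  have hPlow : ∀ t ∈ T, γ / (M:ℝ)^N * ν t ≤ ∑ z ∈ A t, p z := by
    intro t ht
    have h1 : (A t).card • (γ / (M:ℝ)^N) ≤ ∑ z ∈ A t, p z :=
      Finset.card_nsmul_le_sum _ _ _ (fun z _ => hplow z)
    rw [nsmul_eq_mul] at h1
    rw [mul_comm]
    rw [← hcard t ht]
    exact h1
  have hPpos : ∀ t ∈ T, 0 < ∑ z ∈ A t, p z := by
    intro t ht
    exact lt_of_lt_of_le (mul_pos (div_pos hγ0 hMN) (hνpos t ht)) (hPlow t ht)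
  -- c t times atom probability equals the true reward
  have hcEq : ∀ t ∈ T, c t * (∑ z ∈ A t, p z)
      = Sum.elim (fun i => R i (x i)) (fun e => Re e (x e.1) (x e.2)) t := by
    rintro (i | e) ht
    · have hne : (∑ z ∈ A (Sum.inl i), p z) ≠ 0 := ne_of_gt (hPpos _ ht)
      simp only [hc, hA, Sum.elim_inl] at hne ⊢
      rw [hRhat i (x i), if_pos rfl]
      exact div_mul_cancel₀ _ hne
    · have he : e ∈ E := by rw [hT] at ht; exact (Finset.inr_mem_disjSum).1 ht
      have hne : (∑ z ∈ A (Sum.inr e), p z) ≠ 0 := ne_of_gt (hPpos _ ht)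
      simp only [hc, hA, Sum.elim_inr] at hne ⊢
      rw [hRhate e he (x e.1) (x e.2), if_pos ⟨rfl, rfl⟩]
      exact div_mul_cancel₀ _ hne
  have hc0 : ∀ t ∈ T, 0 ≤ c t := by
    rintro (i | e) ht
    · simp only [hc, Sum.elim_inl]
      rw [hRhat i (x i), if_pos rfl]
      have h1 := hPpos _ ht
      simp only [hA, Sum.elim_inl] at h1
      exact div_nonneg (hR i (x i)).1 h1.le
    · have he : e ∈ E := by rw [hT] at ht; exact (Finset.inr_mem_disjSum).1 ht
      simp only [hc, Sum.elim_inr]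
      rw [hRhate e he (x e.1) (x e.2), if_pos ⟨rfl, rfl⟩]
      have h1 := hPpos _ ht
      simp only [hA, Sum.elim_inr] at h1
      exact div_nonneg (hRe e he (x e.1) (x e.2)).1 h1.le
  have hcP1 : ∀ t ∈ T, c t * (∑ z ∈ A t, p z) ≤ 1 := by
    rintro (i | e) ht
    · rw [hcEq _ ht]; exact (hR i (x i)).2
    · have he : e ∈ E := by rw [hT] at ht; exact (Finset.inr_mem_disjSum).1 ht
      rw [hcEq _ ht]; exact (hRe e he (x e.1) (x e.2)).2
  -- rewrite RhatArm as a sum over atoms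
  have hfy : ∀ y, RhatArm y = ∑ t ∈ T, c t * (if y ∈ A t then (1:ℝ) else 0) := by
    intro y
    rw [hRhatArm y, hT, Finset.sum_disjSum]
    congr 1
    · refine Finset.sum_congr rfl (fun i _ => ?_)
      simp only [hc, hA, Sum.elim_inl, Finset.mem_filter, Finset.mem_univ, true_and]
      by_cases h : y i = x i
      · rw [if_pos h, mul_one, h]
      · rw [if_neg h, mul_zero, hRhat i (y i), if_neg h]
    · refine Finset.sum_congr rfl (fun e he => ?_)
      simp only [hc, hA, Sum.elim_inr, Finset.mem_filter, Finset.mem_univ, true_and]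
      by_cases h : y e.1 = x e.1 ∧ y e.2 = x e.2
      · rw [if_pos h, mul_one, hRhate e he (y e.1) (y e.2), if_pos h,
          hRhate e he (x e.1) (x e.2), if_pos ⟨rfl, rfl⟩, h.1, h.2]
      · rw [if_neg h, mul_zero, hRhate e he (y e.1) (y e.2), if_neg h]
  have hf0 : ∀ y, 0 ≤ RhatArm y := by
    intro y
    rw [hfy y]
    refine Finset.sum_nonneg (fun t ht => mul_nonneg (hc0 t ht) ?_)
    split <;> norm_num
  -- total sum of estimated rewards
  have hZ : ∑ y : Fin N → Fin M, RhatArm y = ∑ t ∈ T, c t * ν t := by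
    rw [Finset.sum_congr rfl (fun y _ => hfy y), Finset.sum_comm]
    refine Finset.sum_congr rfl (fun t ht => ?_)
    rw [← Finset.mul_sum]
    congr 1
    rw [Finset.sum_ite_mem, Finset.univ_inter, Finset.sum_const, nsmul_eq_mul, mul_one]
    exact hcard t ht
  have hZ0 : 0 ≤ ∑ y : Fin N → Fin M, RhatArm y :=
    Finset.sum_nonneg (fun y _ => hf0 y)
  -- expectation of estimated reward is the true reward
  have hS : ∑ y : Fin N → Fin M, p y * RhatArm y
      = ∑ i, R i (x i) + ∑ e ∈ E, Re e (x e.1) (x e.2) := by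
    have h1 : ∀ y, p y * RhatArm y
        = ∑ t ∈ T, c t * (if y ∈ A t then p y else 0) := by
      intro y
      rw [hfy y, Finset.mul_sum]
      refine Finset.sum_congr rfl (fun t _ => ?_)
      split <;> ring
    rw [Finset.sum_congr rfl (fun y _ => h1 y), Finset.sum_comm]
    have h2 : ∀ t ∈ T, (∑ y : Fin N → Fin M, c t * (if y ∈ A t then p y else 0))
        = Sum.elim (fun i => R i (x i)) (fun e => Re e (x e.1) (x e.2)) t := by
      intro t ht
      rw [← Finset.mul_sum, Finset.sum_ite_mem, Finset.univ_inter]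
      exact hcEq t ht
    rw [Finset.sum_congr rfl h2, hT, Finset.sum_disjSum]
    simp only [Sum.elim_inl, Sum.elim_inr]
  -- sum of reciprocals of ν
  have hνsum : ∑ t ∈ T, 1 / ν t
      = ((N:ℝ) * M + (E.card:ℝ) * M^2) / (M:ℝ)^N := by
    rw [hT, Finset.sum_disjSum]
    simp only [hν, Sum.elim_inl, Sum.elim_inr, Finset.sum_const, Finset.card_univ,
      Fintype.card_fin, nsmul_eq_mul]
    rw [eq_div_iff (ne_of_gt hMN), add_mul]
    congr 1
    · rw [hpow1]; field_simp
    · rw [hpow2]; field_simp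
  have hαK : α * (∑ t ∈ T, 1 / ν t) = γ / (M:ℝ)^N := by
    rw [hνsum, hα]
    rw [div_mul_div_comm, div_eq_div_iff (by positivity) (ne_of_gt hMN)]
    ring
  -- bound on α * RhatArm y
  have hub : ∀ y, α * RhatArm y ≤ 1 := by
    intro y
    have h1 : RhatArm y ≤ ∑ t ∈ T, c t := by
      rw [hfy y]
      refine Finset.sum_le_sum (fun t ht => ?_)
      have := hc0 t ht
      split <;> nlinarith
    have h2 : ∀ t ∈ T, c t ≤ (M:ℝ)^N / γ * (1 / ν t) := by
      intro t ht
      have hP := hPpos t ht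
      have hlow := hPlow t ht
      have hcp := hcP1 t ht
      have hc0t := hc0 t ht
      have hνt := hνpos t ht
      have hgt : 0 < γ / (M:ℝ)^N * ν t := mul_pos (div_pos hγ0 hMN) hνt
      have h3 : c t ≤ 1 / (∑ z ∈ A t, p z) := by
        rw [le_div_iff₀ hP]; exact hcp
      have h4 : 1 / (∑ z ∈ A t, p z) ≤ 1 / (γ / (M:ℝ)^N * ν t) :=
        one_div_le_one_div_of_le hgt hlow
      have h5 : 1 / (γ / (M:ℝ)^N * ν t) = (M:ℝ)^N / γ * (1 / ν t) := by
        field_simp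
      linarith
    have h4 : ∑ t ∈ T, c t ≤ (M:ℝ)^N / γ * ∑ t ∈ T, 1 / ν t := by
      rw [Finset.mul_sum]
      exact Finset.sum_le_sum h2
    have h5 : α * ((M:ℝ)^N / γ * ∑ t ∈ T, 1 / ν t) = 1 := by
      rw [mul_comm ((M:ℝ)^N / γ), ← mul_assoc, hαK]
      field_simp
    calc α * RhatArm y ≤ α * ((M:ℝ)^N / γ * ∑ t ∈ T, 1 / ν t) := by
          refine mul_le_mul_of_nonneg_left (le_trans h1 h4) hαpos.le
      _ = 1 := h5
  -- second moment bound
  have hsec : ∑ y : Fin N → Fin M, p y * (RhatArm y)^2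
      ≤ (∑ y : Fin N → Fin M, RhatArm y) * (∑ t ∈ T, 1 / ν t) := by
    rw [hZ]
    have := mabsta_second_moment T A c ν p hp0 hc0 hνpos hcP1
    calc ∑ y : Fin N → Fin M, p y * (RhatArm y)^2
        = ∑ y : Fin N → Fin M, p y * (∑ t ∈ T, c t * (if y ∈ A t then (1:ℝ) else 0)) ^ 2 := by
          exact Finset.sum_congr rfl (fun y _ => by rw [hfy y])
      _ ≤ (∑ t ∈ T, c t * ν t) * (∑ t ∈ T, 1 / ν t) := this
  -- decompose the weights
  have hq : ∀ y, w y / W = (p y - γ / (M:ℝ)^N) / (1 - γ) := by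
    intro y
    rw [hp y, add_sub_cancel_right, mul_div_cancel_left₀ _ (ne_of_gt h1γ)]
  have hsum1 : ∑ y : Fin N → Fin M, w y / W = 1 := by
    rw [← Finset.sum_div, ← hWdef, div_self (ne_of_gt hWpos)]
  -- main chain
  set Z := ∑ y : Fin N → Fin M, RhatArm y with hZdef
  set S := ∑ i, R i (x i) + ∑ e ∈ E, Re e (x e.1) (x e.2) with hSdef
  have main : (∑ y : Fin N → Fin M, w y * Real.exp (α * RhatArm y)) / W
      ≤ 1 + α / (1 - γ) * S := by
    have step1 : (∑ y : Fin N → Fin M, w y * Real.exp (α * RhatArm y)) / W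
        = ∑ y : Fin N → Fin M, w y / W * Real.exp (α * RhatArm y) := by
      rw [Finset.sum_div]
      exact Finset.sum_congr rfl (fun y _ => by rw [div_mul_eq_mul_div])
    have step2 : ∑ y : Fin N → Fin M, w y / W * Real.exp (α * RhatArm y)
        ≤ ∑ y : Fin N → Fin M, w y / W * (1 + α * RhatArm y + (α * RhatArm y)^2) := by
      refine Finset.sum_le_sum (fun y _ => ?_)
      refine mul_le_mul_of_nonneg_left ?_ (div_nonneg (hw y).le hWpos.le)
      exact mabsta_exp_quadratic (mul_nonneg hαpos.le (hf0 y)) (hub y)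
    have step3 : ∑ y : Fin N → Fin M, w y / W * (1 + α * RhatArm y + (α * RhatArm y)^2)
        = 1 + α * ∑ y : Fin N → Fin M, (w y / W) * RhatArm y
          + α^2 * ∑ y : Fin N → Fin M, (w y / W) * (RhatArm y)^2 := by
      calc ∑ y : Fin N → Fin M, w y / W * (1 + α * RhatArm y + (α * RhatArm y)^2)
          = ∑ y : Fin N → Fin M,
            (w y / W + α * ((w y / W) * RhatArm y) + α^2 * ((w y / W) * (RhatArm y)^2)) := by
            exact Finset.sum_congr rfl (fun y _ => by ring)
        _ = (∑ y : Fin N → Fin M, w y / W)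
            + (∑ y : Fin N → Fin M, α * ((w y / W) * RhatArm y))
            + (∑ y : Fin N → Fin M, α^2 * ((w y / W) * (RhatArm y)^2)) := by
            rw [← Finset.sum_add_distrib, ← Finset.sum_add_distrib]
        _ = 1 + α * ∑ y : Fin N → Fin M, (w y / W) * RhatArm y
            + α^2 * ∑ y : Fin N → Fin M, (w y / W) * (RhatArm y)^2 := by
            rw [hsum1, ← Finset.mul_sum, ← Finset.mul_sum]
    have step4 : ∑ y : Fin N → Fin M, (w y / W) * RhatArm y
        = (S - γ / (M:ℝ)^N * Z) / (1 - γ) := by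
      calc ∑ y : Fin N → Fin M, (w y / W) * RhatArm y
          = ∑ y : Fin N → Fin M,
            (p y * RhatArm y / (1-γ) - γ / (M:ℝ)^N * RhatArm y / (1-γ)) := by
            refine Finset.sum_congr rfl (fun y _ => ?_)
            rw [hq y]; ring
        _ = (∑ y : Fin N → Fin M, p y * RhatArm y) / (1-γ)
            - γ / (M:ℝ)^N * (∑ y : Fin N → Fin M, RhatArm y) / (1-γ) := by
            rw [Finset.sum_sub_distrib, ← Finset.sum_div, ← Finset.sum_div, ← Finset.mul_sum]
        _ = (S - γ / (M:ℝ)^N * Z) / (1 - γ) := by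
            rw [hS, ← hZdef]; ring
    have step5 : ∑ y : Fin N → Fin M, (w y / W) * (RhatArm y)^2
        ≤ (∑ y : Fin N → Fin M, p y * (RhatArm y)^2) / (1-γ) := by
      rw [Finset.sum_div]
      refine Finset.sum_le_sum (fun y _ => ?_)
      rw [hq y, div_mul_eq_mul_div]
      have h2 : (0:ℝ) ≤ γ / (M:ℝ)^N := le_of_lt (div_pos hγ0 hMN)
      have h3 : (p y - γ / (M:ℝ)^N) * (RhatArm y)^2 ≤ p y * (RhatArm y)^2 :=
        mul_le_mul_of_nonneg_right (by linarith) (sq_nonneg _)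
      exact div_le_div_of_nonneg_right h3 h1γ.le
    have step6 : α^2 * ((∑ y : Fin N → Fin M, p y * (RhatArm y)^2) / (1-γ))
        ≤ α * (γ / (M:ℝ)^N * Z) / (1-γ) := by
      have h12 : α^2 * ((∑ y : Fin N → Fin M, p y * (RhatArm y)^2) / (1-γ))
          = (α^2 * (∑ y : Fin N → Fin M, p y * (RhatArm y)^2)) / (1-γ) := by ring
      rw [h12]
      have h1 : α^2 * (∑ y : Fin N → Fin M, p y * (RhatArm y)^2)
          ≤ α^2 * (Z * (∑ t ∈ T, 1 / ν t)) := by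
        refine mul_le_mul_of_nonneg_left ?_ (sq_nonneg α)
        rw [hZdef]
        exact hsec
      have h2 : α^2 * (Z * (∑ t ∈ T, 1 / ν t)) = α * (γ / (M:ℝ)^N * Z) := by
        calc α^2 * (Z * (∑ t ∈ T, 1 / ν t))
            = α * (α * (∑ t ∈ T, 1 / ν t)) * Z := by ring
          _ = α * (γ / (M:ℝ)^N * Z) := by rw [hαK]; ring
      exact div_le_div_of_nonneg_right (le_trans h1 (le_of_eq h2)) h1γ.le
    calc (∑ y : Fin N → Fin M, w y * Real.exp (α * RhatArm y)) / W
        ≤ 1 + α * ((S - γ / (M:ℝ)^N * Z) / (1 - γ))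
          + α^2 * ((∑ y : Fin N → Fin M, p y * (RhatArm y)^2) / (1-γ)) := by
          rw [step1]
          refine le_trans step2 ?_
          rw [step3, step4]
          have := mul_le_mul_of_nonneg_left step5 (sq_nonneg α)
          linarith
      _ ≤ 1 + α * ((S - γ / (M:ℝ)^N * Z) / (1 - γ)) + α * (γ / (M:ℝ)^N * Z) / (1-γ) := by
          linarith [step6]
      _ = 1 + α / (1 - γ) * S := by ring
  refine le_trans main ?_
  have hlast : 0 ≤ (Real.exp 1 - 2) * α ^ 2 / (1 - γ) * ((E.card : ℝ) / (M : ℝ) ^ (N - 2)) * Z := by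
    have he2 : (2:ℝ) ≤ Real.exp 1 := by
      have := Real.add_one_le_exp 1
      linarith
    have h1 : 0 ≤ (Real.exp 1 - 2) * α ^ 2 / (1 - γ) :=
      div_nonneg (mul_nonneg (by linarith) (sq_nonneg α)) h1γ.le
    have h2 : 0 ≤ (E.card : ℝ) / (M : ℝ) ^ (N - 2) := div_nonneg (Nat.cast_nonneg _) hpw2.le
    exact mul_nonneg (mul_nonneg h1 h2) hZ0
  linarith
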